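/- The distribution of the exit time from {0,N} of simple random walk started at 1 is given by the Laplace trigonometric sum: P_1(τ_{0,N} = n) = (2/N) Σ_{k=1}^{⌈(N−1)/2⌉} cos^{n−1}(π(2k−1)/N) sin²(π(2k−1)/N). -/

import Mathlib

open MeasureTheory ProbabilityTheory Real

noncomputable section RW

/-- step value of a ±1 step encoded by a Bool -/
def rwStep (b : Bool) : ℤ := if b then 1 else -1

/-- position of the walk started at `x` after `k` steps -/
def rwWalk (x : ℤ) (ε : ℕ → Bool) (k : ℕ) : ℤ := x + ∑ i ∈ Finset.range k, rwStep (ε i)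

/-- extend a finite tuple of steps by `false` -/
def rwExt {m : ℕ} (ε : Fin m → Bool) (i : ℕ) : Bool := if h : i < m then ε ⟨i, h⟩ else false

/-- path stays strictly inside `(0,N)` before time `m` and is at `0` or `N` at time `m` -/
def rwHit (N m : ℕ) (x : ℤ) (ε : ℕ → Bool) : Prop :=
  (∀ k < m, 0 < rwWalk x ε k ∧ rwWalk x ε k < N) ∧ (rwWalk x ε m = 0 ∨ rwWalk x ε m = N)

instance rwHit.decidable (N m : ℕ) (x : ℤ) (ε : ℕ → Bool) : Decidable (rwHit N m x ε) := by
  unfold rwHit; infer_instance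

/-- number (as a real) of hitting paths, defined recursively -/
def rwCnt (N : ℕ) : ℕ → ℤ → ℝ
  | 0, x => if x = 0 ∨ x = (N : ℤ) then 1 else 0
  | (m+1), x => if 0 < x ∧ x < (N : ℤ) then rwCnt N m (x-1) + rwCnt N m (x+1) else 0

/-- spectral kernel -/
def rwF (N m : ℕ) (x y : ℤ) : ℝ :=
  (2 / N) * ∑ j ∈ Finset.Icc 1 (N-1),
    (2 * Real.cos (π * j / N)) ^ m * (Real.sin (π * j * x / N) * Real.sin (π * j * y / N))

lemma rwStep_cases (b : Bool) : rwStep b = 1 ∨ rwStep b = -1 := by cases b <;> simp [rwStep]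

lemma rwWalk_zero (x : ℤ) (ε : ℕ → Bool) : rwWalk x ε 0 = x := by simp [rwWalk]

lemma rwWalk_succ (x : ℤ) (ε : ℕ → Bool) (k : ℕ) :
    rwWalk x ε (k+1) = rwWalk x ε k + rwStep (ε k) := by
  simp [rwWalk, Finset.sum_range_succ]; ring

lemma rwExt_cons_zero {m : ℕ} (b : Bool) (ε : Fin m → Bool) : rwExt (Fin.cons b ε) 0 = b := by
  simp [rwExt]

lemma rwExt_cons_succ {m : ℕ} (b : Bool) (ε : Fin m → Bool) (i : ℕ) :
    rwExt (Fin.cons b ε) (i+1) = rwExt ε i := by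
  unfold rwExt
  by_cases h : i < m
  · rw [dif_pos (by omega : i + 1 < m + 1), dif_pos h]
    exact @Fin.cons_succ m (fun _ => Bool) b ε ⟨i, h⟩
  · rw [dif_neg (by omega), dif_neg h]

lemma rwWalk_cons {m : ℕ} (x : ℤ) (b : Bool) (ε : Fin m → Bool) (k : ℕ) :
    rwWalk x (rwExt (Fin.cons b ε)) (k+1) = rwWalk (x + rwStep b) (rwExt ε) k := by
  unfold rwWalk
  rw [Finset.sum_range_succ']
  simp only [rwExt_cons_zero, rwExt_cons_succ]
  ring

lemma rwHit_cons {N m : ℕ} (x : ℤ) (b : Bool) (ε : Fin m → Bool) :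
    rwHit N (m+1) x (rwExt (Fin.cons b ε)) ↔
      (0 < x ∧ x < N) ∧ rwHit N m (x + rwStep b) (rwExt ε) := by
  unfold rwHit
  constructor
  · rintro ⟨h1, h2⟩
    have hx := h1 0 (by omega)
    rw [rwWalk_zero] at hx
    refine ⟨hx, ⟨fun k hk => ?_, ?_⟩⟩
    · have := h1 (k+1) (by omega)
      rwa [rwWalk_cons] at this
    · rwa [rwWalk_cons] at h2
  · rintro ⟨hx, h1, h2⟩
    refine ⟨fun k hk => ?_, ?_⟩
    · cases k with
      | zero => rw [rwWalk_zero]; exact hx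
      | succ k => rw [rwWalk_cons]; exact h1 k (by omega)
    · rw [rwWalk_cons]; exact h2

lemma rwConsEquiv_eq {m : ℕ} (b : Bool) (ε : Fin m → Bool) :
    (Fin.consEquiv (fun _ : Fin (m+1) => Bool)) (b, ε) = Fin.cons b ε := rfl

/-- peeling the first step off the path-counting sum -/
lemma rwSum_eq_cnt (N : ℕ) : ∀ (m : ℕ) (x : ℤ),
    (∑ ε : Fin m → Bool, if rwHit N m x (rwExt ε) then (1:ℝ) else 0) = rwCnt N m x := by
  intro m
  induction m with
  | zero =>
    intro x
    simp [rwHit, rwWalk, rwCnt]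
  | succ m ih =>
    intro x
    rw [← (Fin.consEquiv (fun _ : Fin (m+1) => Bool)).sum_comp
      (fun ε => if rwHit N (m+1) x (rwExt ε) then (1:ℝ) else 0)]
    rw [Fintype.sum_prod_type]
    by_cases hx : 0 < x ∧ x < (N:ℤ)
    · have : ∀ b : Bool, ∀ ε : Fin m → Bool,
          (if rwHit N (m+1) x (rwExt (Fin.cons b ε)) then (1:ℝ) else 0)
            = if rwHit N m (x + rwStep b) (rwExt ε) then (1:ℝ) else 0 := by
        intro b ε
        simp [rwHit_cons, hx]
      refine (Finset.sum_congr rfl fun b _ => Finset.sum_congr rfl fun ε _ => this b ε).trans ?_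
      rw [Fintype.sum_bool]
      simp only [ih]
      rw [rwCnt, if_pos hx]
      norm_num [rwStep]
      ring_nf
    · have : ∀ b : Bool, ∀ ε : Fin m → Bool,
          (if rwHit N (m+1) x (rwExt (Fin.cons b ε)) then (1:ℝ) else 0) = 0 := by
        intro b ε
        simp [rwHit_cons, hx]
      refine (Finset.sum_congr rfl fun b _ => Finset.sum_congr rfl fun ε _ => this b ε).trans ?_
      rw [rwCnt, if_neg hx]
      norm_num


/-- geometric sum of cosines -/
lemma rwCosSum (N : ℕ) (hN : 1 ≤ N) (m : ℤ) :
    ∑ j ∈ Finset.range N, Real.cos (π * m * j / N) =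
      if (2*(N:ℤ)) ∣ m then (N:ℝ) else if 2 ∣ m then 0 else 1 := by
  have hNR : (N:ℝ) ≠ 0 := Nat.cast_ne_zero.2 (by omega)
  by_cases hdvd : (2*(N:ℤ)) ∣ m
  · rw [if_pos hdvd]
    obtain ⟨k, hk⟩ := hdvd
    have : ∀ j ∈ Finset.range N, Real.cos (π * m * j / N) = 1 := by
      intro j _
      have harg : π * m * j / N = (j * k : ℤ) * (2 * π) := by
        rw [hk]; push_cast; field_simp
      rw [harg, Real.cos_int_mul_two_pi]
    rw [Finset.sum_congr rfl this]
    simp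
  · rw [if_neg hdvd]
    set θ : ℝ := π * m / N with hθ
    set z : ℂ := Complex.exp (θ * Complex.I) with hz
    have hzj : ∀ j : ℕ, z ^ j = Complex.exp ((j * θ : ℝ) * Complex.I) := by
      intro j
      rw [hz, ← Complex.exp_nat_mul]
      congr 1
      push_cast
      ring
    have hcos : ∀ j : ℕ, Real.cos (π * m * j / N) = (z ^ j).re := by
      intro j
      rw [hzj j, Complex.exp_ofReal_mul_I_re]
      congr 1
      rw [hθ]; ring
    have hsum : ∑ j ∈ Finset.range N, Real.cos (π * m * j / N)
        = (∑ j ∈ Finset.range N, z ^ j).re := by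
      rw [Complex.re_sum]
      exact Finset.sum_congr rfl (fun j _ => hcos j)
    have hzne : z ≠ 1 := by
      intro h
      apply hdvd
      rw [hz, Complex.exp_eq_one_iff] at h
      obtain ⟨k, hk⟩ := h
      have hI : (θ : ℂ) = (k : ℂ) * (2 * (π:ℝ)) :=
        mul_right_cancel₀ Complex.I_ne_zero (hk.trans (by ring))
      have hR : θ = (k:ℝ) * (2 * π) := by exact_mod_cast hI
      rw [hθ] at hR
      have hπ : π ≠ 0 := Real.pi_ne_zero
      have h2 : π * (m:ℝ) = π * (((2 * N * k : ℤ):ℝ)) := by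
        push_cast
        field_simp at hR
        linear_combination π * hR
      have : (m : ℝ) = ((2 * N * k : ℤ) : ℝ) := mul_left_cancel₀ hπ h2
      exact ⟨k, by exact_mod_cast this⟩
    have hgeom : ∑ j ∈ Finset.range N, z ^ j = (z ^ N - 1) / (z - 1) :=
      geom_sum_eq hzne N
    have hzN : z ^ N = Complex.exp ((m * π : ℝ) * Complex.I) := by
      rw [hzj N]
      congr 2
      rw [hθ]; field_simp
    rcases Int.even_or_odd m with hm | hm
    · -- m even : z^N = 1, sum = 0
      obtain ⟨k, hk⟩ := hm
      rw [if_pos ⟨k, by omega⟩]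
      have hzN1 : z ^ N = 1 := by
        rw [hzN]
        have : ((m * π : ℝ) : ℂ) * Complex.I = (k : ℤ) * (2 * π * Complex.I) := by
          push_cast; rw [hk]; push_cast; ring
        rw [this, Complex.exp_int_mul_two_pi_mul_I]
      rw [hsum, hgeom, hzN1]
      simp
    · -- m odd : z^N = -1, sum = 2/(1-z), real part 1
      rw [if_neg (by rw [Int.odd_iff] at hm; omega)]
      obtain ⟨k, hk⟩ := hm
      have hzN1 : z ^ N = -1 := by
        rw [hzN]
        have : ((m * π : ℝ) : ℂ) * Complex.I = (k : ℤ) * (2 * π * Complex.I) + π * Complex.I := by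
          push_cast; rw [hk]; push_cast; ring
        rw [this, Complex.exp_add, Complex.exp_int_mul_two_pi_mul_I, Complex.exp_pi_mul_I]
        ring
      set w : ℂ := (z ^ N - 1) / (z - 1) with hw
      have hz0 : z ≠ 0 := Complex.exp_ne_zero _
      have hz1 : z - 1 ≠ 0 := sub_ne_zero.2 hzne
      have hconjz : (starRingEnd ℂ) z = z⁻¹ := by
        rw [hz, ← Complex.exp_conj, ← Complex.exp_neg]
        congr 1
        simp [Complex.conj_ofReal]
      have hwconj : w + (starRingEnd ℂ) w = 2 := by
        rw [hw, hzN1]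
        have hz1' : z⁻¹ - 1 ≠ 0 := by
          rw [sub_ne_zero]
          intro h
          exact hzne (by rw [← inv_inv z, h, inv_one])
        have h1z : (1:ℂ) - z ≠ 0 := fun h => hzne (by linear_combination -h)
        simp only [map_div₀, map_sub, map_neg, map_one, hconjz]
        rw [div_add_div _ _ hz1 hz1', div_eq_iff (mul_ne_zero hz1 hz1')]
        field_simp
        ring
      have : ((2 : ℝ) * w.re : ℝ) = (2 : ℝ) := by
        have := Complex.add_conj w
        rw [hwconj] at this
        exact_mod_cast this.symm
      have hwre : w.re = 1 := by linarith
      rw [hsum, hgeom]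
      exact hwre

/-- discrete orthogonality of sines -/
lemma rwF_zero (N : ℕ) (hN : 2 ≤ N) (x y : ℤ) (hx0 : 0 ≤ x) (hxN : x ≤ (N:ℤ))
    (hy0 : 0 ≤ y) (hyN : y ≤ (N:ℤ)) :
    rwF N 0 x y = if x = y ∧ 0 < x ∧ x < (N:ℤ) then 1 else 0 := by
  have hNR : (N:ℝ) ≠ 0 := Nat.cast_ne_zero.2 (by omega)
  have hprod : ∀ j : ℕ, Real.sin (π * j * x / N) * Real.sin (π * j * y / N)
      = (Real.cos (π * ((x - y : ℤ) : ℝ) * j / N) - Real.cos (π * ((x + y : ℤ) : ℝ) * j / N)) / 2 := by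
    intro j
    have e1 : π * ((x - y : ℤ) : ℝ) * j / N = π * j * x / N - π * j * y / N := by push_cast; ring
    have e2 : π * ((x + y : ℤ) : ℝ) * j / N = π * j * x / N + π * j * y / N := by push_cast; ring
    rw [e1, e2, Real.cos_sub, Real.cos_add]
    ring
  have hins : Finset.range N = insert 0 (Finset.Icc 1 (N-1)) := by
    ext j; simp only [Finset.mem_range, Finset.mem_insert, Finset.mem_Icc]; omega
  have hsum : ∀ c : ℤ, ∑ j ∈ Finset.Icc 1 (N-1), Real.cos (π * (c : ℝ) * j / N)
      = (∑ j ∈ Finset.range N, Real.cos (π * (c : ℝ) * j / N)) - 1 := by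
    intro c
    rw [hins, Finset.sum_insert (by simp)]
    norm_num
  have key : rwF N 0 x y =
      ((∑ j ∈ Finset.range N, Real.cos (π * ((x - y : ℤ) : ℝ) * j / N))
        - (∑ j ∈ Finset.range N, Real.cos (π * ((x + y : ℤ) : ℝ) * j / N))) / N := by
    unfold rwF
    simp only [pow_zero, one_mul, hprod]
    rw [← Finset.sum_div, Finset.sum_sub_distrib, hsum, hsum]
    field_simp
    ring
  rw [key, rwCosSum N (by omega), rwCosSum N (by omega)]
  have hd1 : (2*(N:ℤ)) ∣ (x - y) ↔ x = y := by
    constructor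
    · intro h
      by_contra hne
      have habs : (0:ℤ) < |x - y| := abs_pos.2 (sub_ne_zero.2 hne)
      have h2 : (2*(N:ℤ)) ≤ |x - y| := Int.le_of_dvd habs ((dvd_abs _ _).2 h)
      have h3 : |x - y| ≤ (N:ℤ) := abs_le.2 ⟨by omega, by omega⟩
      omega
    · rintro rfl; simp
  have hd2 : (2*(N:ℤ)) ∣ (x + y) ↔ ((x = 0 ∧ y = 0) ∨ (x = (N:ℤ) ∧ y = (N:ℤ))) := by
    constructor
    · intro h
      rcases eq_or_lt_of_le (by omega : (0:ℤ) ≤ x + y) with h0 | h0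
      · left; omega
      · have h2 : (2*(N:ℤ)) ≤ x + y := Int.le_of_dvd h0 h
        right; omega
    · rintro (⟨rfl, rfl⟩ | ⟨rfl, rfl⟩)
      · simp
      · exact ⟨1, by ring⟩
  have hpar : ((2:ℤ) ∣ (x - y)) ↔ ((2:ℤ) ∣ (x + y)) := by omega
  simp only [hd1, hd2, hpar]
  split_ifs <;> first | (exfalso; omega) | norm_num [hNR]

/-- spectral recursion -/
lemma rwF_succ (N m : ℕ) (x y : ℤ) :
    rwF N (m+1) x y = rwF N m (x-1) y + rwF N m (x+1) y := by
  unfold rwF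
  rw [← mul_add, ← Finset.sum_add_distrib]
  congr 1
  apply Finset.sum_congr rfl
  intro j _
  have e1 : π * (j:ℝ) * ((x - 1 : ℤ):ℝ) / N = π * j * x / N - π * j / N := by push_cast; ring
  have e2 : π * (j:ℝ) * ((x + 1 : ℤ):ℝ) / N = π * j * x / N + π * j / N := by push_cast; ring
  rw [e1, e2, Real.sin_sub, Real.sin_add, pow_succ]
  ring

lemma rwF_left_zero (N m : ℕ) (y : ℤ) : rwF N m 0 y = 0 := by
  unfold rwF
  have : ∀ j ∈ Finset.Icc 1 (N-1), (2 * Real.cos (π * j / N)) ^ m *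
      (Real.sin (π * j * ((0:ℤ):ℝ) / N) * Real.sin (π * j * y / N)) = 0 := by
    intro j _
    simp
  rw [Finset.sum_congr rfl this]
  simp

lemma rwF_left_N (N m : ℕ) (hN : 1 ≤ N) (y : ℤ) : rwF N m ((N:ℤ)) y = 0 := by
  have hNR : (N:ℝ) ≠ 0 := Nat.cast_ne_zero.2 (by omega)
  unfold rwF
  have : ∀ j ∈ Finset.Icc 1 (N-1), (2 * Real.cos (π * j / N)) ^ m *
      (Real.sin (π * j * (((N:ℤ)):ℝ) / N) * Real.sin (π * j * y / N)) = 0 := by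
    intro j _
    have e : π * (j:ℝ) * (((N:ℤ)):ℝ) / N = j * π := by push_cast; field_simp
    rw [e, Real.sin_nat_mul_pi]
    ring
  rw [Finset.sum_congr rfl this]
  simp

/-- the counting function equals the spectral expression -/
lemma rwCnt_eq_F (N : ℕ) (hN : 2 ≤ N) : ∀ (m : ℕ) (x : ℤ), 0 ≤ x → x ≤ (N:ℤ) →
    rwCnt N (m+1) x = rwF N m x 1 + rwF N m x ((N:ℤ) - 1) := by
  intro m
  induction m with
  | zero =>
    intro x hx0 hxN
    rw [rwF_zero N hN x 1 hx0 hxN (by omega) (by omega),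
        rwF_zero N hN x ((N:ℤ)-1) hx0 hxN (by omega) (by omega)]
    show (if 0 < x ∧ x < (N:ℤ) then rwCnt N 0 (x-1) + rwCnt N 0 (x+1) else 0) = _
    show (if 0 < x ∧ x < (N:ℤ) then
        (if x - 1 = 0 ∨ x - 1 = (N:ℤ) then (1:ℝ) else 0) +
        (if x + 1 = 0 ∨ x + 1 = (N:ℤ) then (1:ℝ) else 0) else 0) = _
    split_ifs <;> first | (exfalso; omega) | norm_num
  | succ m ih =>
    intro x hx0 hxN
    show (if 0 < x ∧ x < (N:ℤ) then rwCnt N (m+1) (x-1) + rwCnt N (m+1) (x+1) else 0) = _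
    by_cases hint : 0 < x ∧ x < (N:ℤ)
    · rw [if_pos hint, ih (x-1) (by omega) (by omega), ih (x+1) (by omega) (by omega),
        rwF_succ, rwF_succ]
      ring
    · rw [if_neg hint]
      have hx : x = 0 ∨ x = (N:ℤ) := by omega
      rcases hx with rfl | rfl
      · rw [rwF_left_zero, rwF_left_zero]; ring
      · rw [rwF_left_N N _ (by omega), rwF_left_N N _ (by omega)]; ring


/-- final algebraic reduction -/
lemma rwFinal (N n : ℕ) (hN : 2 ≤ N) (hn : 1 ≤ n) :
    (1/2:ℝ)^n * rwCnt N n 1 =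
      (2 / N) * ∑ k ∈ Finset.Icc 1 (N / 2),
        Real.cos (π * (2 * k - 1) / N) ^ (n - 1) * Real.sin (π * (2 * k - 1) / N) ^ 2 := by
  have hNR : (N:ℝ) ≠ 0 := Nat.cast_ne_zero.2 (by omega)
  obtain ⟨m, rfl⟩ : ∃ m, n = m + 1 := ⟨n - 1, by omega⟩
  rw [rwCnt_eq_F N hN m 1 (by norm_num) (by exact_mod_cast (by omega : (1:ℤ) ≤ (N:ℤ)))]
  unfold rwF
  rw [← mul_add, ← Finset.sum_add_distrib, mul_left_comm, Finset.mul_sum]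
  have hterm : ∀ j ∈ Finset.Icc 1 (N-1),
      (1/2:ℝ)^(m+1) * ((2 * Real.cos (π * j / N)) ^ m *
          (Real.sin (π * j * ((1:ℤ):ℝ) / N) * Real.sin (π * j * ((1:ℤ):ℝ) / N)) +
        (2 * Real.cos (π * j / N)) ^ m *
          (Real.sin (π * j * ((1:ℤ):ℝ) / N) * Real.sin (π * j * (((N:ℤ) - 1 : ℤ):ℝ) / N)))
      = if j % 2 = 1 then Real.cos (π * j / N) ^ m * Real.sin (π * j / N) ^ 2 else 0 := by
    intro j hj
    have hj1 : π * (j:ℝ) * ((1:ℤ):ℝ) / N = π * j / N := by push_cast; ring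
    have hjN : π * (j:ℝ) * (((N:ℤ) - 1 : ℤ):ℝ) / N = j * π - π * j / N := by
      push_cast; field_simp
    rw [hj1, hjN, Real.sin_nat_mul_pi_sub]
    rcases Nat.even_or_odd j with hj2 | hj2
    · rw [if_neg (by rw [Nat.even_iff] at hj2; omega)]
      rw [Even.neg_one_pow hj2]
      ring
    · rw [if_pos (Nat.odd_iff.1 hj2)]
      rw [Odd.neg_one_pow hj2, mul_pow]
      have h2 : ((1:ℝ)/2)^m * 2^m = 1 := by rw [← mul_pow]; norm_num
      linear_combination (Real.cos (π * j / N) ^ m * Real.sin (π * j / N) ^ 2) * h2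
  rw [Finset.sum_congr rfl hterm, ← Finset.sum_filter]
  congr 1
  refine Finset.sum_nbij' (fun j => (j+1)/2) (fun k => 2*k-1) ?_ ?_ ?_ ?_ ?_
  · intro j hj
    simp only [Finset.mem_filter, Finset.mem_Icc] at hj ⊢
    omega
  · intro k hk
    simp only [Finset.mem_filter, Finset.mem_Icc] at hk ⊢
    omega
  · intro j hj
    simp only [Finset.mem_filter, Finset.mem_Icc] at hj
    omega
  · intro k hk
    simp only [Finset.mem_filter, Finset.mem_Icc] at hk
    omega
  · intro j hj
    simp only [Finset.mem_filter, Finset.mem_Icc] at hj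
    have hjr : (j:ℝ) = 2 * (((j+1)/2 : ℕ):ℝ) - 1 := by
      have h2 : (2 * ((j+1)/2) - 1 : ℕ) = j := by omega
      calc (j:ℝ) = ((2 * ((j+1)/2) - 1 : ℕ) : ℝ) := by rw [h2]
      _ = 2 * (((j+1)/2 : ℕ):ℝ) - 1 := by
          push_cast [Nat.cast_sub (by omega : 1 ≤ 2 * ((j+1)/2))]
          ring
    rw [← hjr, Nat.add_sub_cancel]

theorem stmt_5
    {Ω : Type*} [MeasurableSpace Ω] (P : Measure Ω) [IsProbabilityMeasure P]
    (X : ℕ → Ω → ℤ) (hmeas : ∀ i, Measurable (X i))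
    (hindep : iIndepFun X P)
    (hup : ∀ i, P {ω | X i ω = 1} = 1/2)
    (hdown : ∀ i, P {ω | X i ω = -1} = 1/2)
    (N : ℕ) (hN : 2 ≤ N)
    (S : ℕ → Ω → ℤ) (hS : ∀ n ω, S n ω = 1 + ∑ i ∈ Finset.range n, X i ω)
    (n : ℕ) (hn : 1 ≤ n) :
    (P {ω | (S n ω = 0 ∨ S n ω = (N : ℤ)) ∧
        ∀ k < n, S k ω ≠ 0 ∧ S k ω ≠ (N : ℤ)}).toReal
      = (2 / N) * ∑ k ∈ Finset.Icc 1 (N / 2),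
          Real.cos (π * (2 * k - 1) / N) ^ (n - 1)
            * Real.sin (π * (2 * k - 1) / N) ^ 2 := by
  set E : Set Ω := {ω | (S n ω = 0 ∨ S n ω = (N : ℤ)) ∧
        ∀ k < n, S k ω ≠ 0 ∧ S k ω ≠ (N : ℤ)} with hE
  set A : (Fin n → Bool) → Set Ω :=
    fun ε => ⋂ i ∈ Finset.range n, X i ⁻¹' {rwStep (rwExt ε i)} with hA
  have hSmeas : ∀ k, Measurable (S k) := by
    intro k
    have : S k = fun ω => 1 + ∑ i ∈ Finset.range k, X i ω := funext (hS k)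
    rw [this]
    exact measurable_const.add (Finset.measurable_sum _ (fun i _ => hmeas i))
  have hEmeas : MeasurableSet E := by
    have : E = ((S n ⁻¹' {0}) ∪ (S n ⁻¹' {(N:ℤ)})) ∩
        ⋂ k ∈ Finset.range n, ((S k ⁻¹' {0})ᶜ ∩ (S k ⁻¹' {(N:ℤ)})ᶜ) := by
      ext ω
      simp [hE, Set.mem_iInter, and_comm]
    rw [this]
    refine MeasurableSet.inter (MeasurableSet.union ?_ ?_) ?_
    · exact hSmeas n (measurableSet_singleton _)
    · exact hSmeas n (measurableSet_singleton _)
    · exact MeasurableSet.biInter (Set.to_countable _) (fun k _ =>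
        ((hSmeas k (measurableSet_singleton _)).compl).inter
          ((hSmeas k (measurableSet_singleton _)).compl))
  have hAmeas : ∀ ε, MeasurableSet (A ε) := fun ε =>
    MeasurableSet.biInter (Set.to_countable _) (fun i _ => hmeas i (measurableSet_singleton _))
  have hXhalf : ∀ (i : ℕ) (c : ℤ), c = 1 ∨ c = -1 → P (X i ⁻¹' {c}) = 1/2 := by
    intro i c hc
    rcases hc with rfl | rfl
    · have h : X i ⁻¹' {(1:ℤ)} = {ω | X i ω = 1} := by ext ω; simp
      rw [h]; exact hup i
    · have h : X i ⁻¹' {(-1:ℤ)} = {ω | X i ω = -1} := by ext ω; simp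
      rw [h]; exact hdown i
  have hPA : ∀ ε, P (A ε) = (1/2 : ENNReal)^n := by
    intro ε
    rw [hA]
    rw [hindep.measure_inter_preimage_eq_mul (Finset.range n)
      (sets := fun i => {rwStep (rwExt ε i)}) (fun i _ => measurableSet_singleton _)]
    rw [Finset.prod_congr rfl (fun i _ => hXhalf i _ (rwStep_cases _))]
    rw [Finset.prod_const, Finset.card_range]
  have hSA : ∀ ε : Fin n → Bool, ∀ ω ∈ A ε, ∀ k ≤ n, S k ω = rwWalk 1 (rwExt ε) k := by
    intro ε ω hω k hk
    rw [hS]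
    unfold rwWalk
    congr 1
    apply Finset.sum_congr rfl
    intro i hi
    have hi' : i ∈ Finset.range n := by
      simp only [Finset.mem_range] at hi ⊢; omega
    have := Set.mem_iInter₂.1 hω i hi'
    simpa using this
  have hEiff : ∀ ε : Fin n → Bool, ∀ ω ∈ A ε, (ω ∈ E ↔ rwHit N n 1 (rwExt ε)) := by
    intro ε ω hω
    have hs := hSA ε ω hω
    have hN' : (2:ℤ) ≤ (N:ℤ) := by exact_mod_cast hN
    constructor
    · rintro ⟨h1, h2⟩
      have hint : ∀ k, k < n → 0 < rwWalk 1 (rwExt ε) k ∧ rwWalk 1 (rwExt ε) k < (N:ℤ) := by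
        intro k
        induction k with
        | zero => intro _; rw [rwWalk_zero]; omega
        | succ k ihk =>
          intro hk1
          have h3 := ihk (by omega)
          have h4 := h2 (k+1) hk1
          rw [hs (k+1) (by omega)] at h4
          have h5 := rwWalk_succ 1 (rwExt ε) k
          rcases rwStep_cases (rwExt ε k) with h6 | h6 <;> omega
      refine ⟨hint, ?_⟩
      rw [← hs n le_rfl]
      exact h1
    · rintro ⟨h1, h2⟩
      constructor
      · rw [hs n le_rfl]; exact h2
      · intro k hk
        have := h1 k hk
        rw [hs k (by omega)]
        omega
  have hbad : ∀ i : ℕ, P {ω | X i ω ≠ 1 ∧ X i ω ≠ -1} = 0 := by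
    intro i
    have hd : Disjoint {ω | X i ω = 1} {ω | X i ω = -1} := by
      rw [Set.disjoint_left]
      intro ω h1 h2
      simp only [Set.mem_setOf_eq] at h1 h2
      omega
    have hm1 : MeasurableSet {ω | X i ω = 1} := hmeas i (measurableSet_singleton _)
    have hm2 : MeasurableSet {ω | X i ω = -1} := hmeas i (measurableSet_singleton _)
    have hu : P ({ω | X i ω = 1} ∪ {ω | X i ω = -1}) = 1 := by
      rw [measure_union hd hm2, hup i, hdown i, ENNReal.add_halves]
    have hc : {ω | X i ω ≠ 1 ∧ X i ω ≠ -1} = ({ω | X i ω = 1} ∪ {ω | X i ω = -1})ᶜ := by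
      ext ω; simp [not_or]
    rw [hc, measure_compl (hm1.union hm2) (by rw [hu]; exact ENNReal.one_ne_top), hu, measure_univ,
      tsub_self]
  have hcover : P (E \ ⋃ ε : Fin n → Bool, A ε) = 0 := by
    have hsub : E \ (⋃ ε : Fin n → Bool, A ε) ⊆
        ⋃ i : ℕ, {ω | X i ω ≠ 1 ∧ X i ω ≠ -1} := by
      rintro ω ⟨-, hω⟩
      by_contra hcon
      simp only [Set.mem_iUnion, not_exists, Set.mem_setOf_eq, not_and, not_not] at hcon
      apply hω
      refine Set.mem_iUnion.2 ⟨fun i => decide (X i ω = 1), ?_⟩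
      rw [hA]
      refine Set.mem_iInter₂.2 (fun i hi => ?_)
      have hi' : i < n := Finset.mem_range.1 hi
      have hval : X i ω = 1 ∨ X i ω = -1 := by
        by_cases h1 : X i ω = 1
        · exact Or.inl h1
        · exact Or.inr (hcon i (fun h => absurd h h1))
      simp only [Set.mem_preimage, Set.mem_singleton_iff, rwExt, dif_pos hi']
      rcases hval with h1 | h1
      · simp [h1, rwStep]
      · have : ¬ (X i ω = 1) := by rw [h1]; omega
        simp [h1, this, rwStep]
    refine measure_mono_null hsub ?_
    exact measure_iUnion_null_iff.2 (fun i => hbad i)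
  have hAdisj : Pairwise (Function.onFun Disjoint A) := by
    intro ε ε' hne
    obtain ⟨i, hi⟩ := Function.ne_iff.1 hne
    rw [Function.onFun, Set.disjoint_left]
    intro ω h1 h2
    have e1 := Set.mem_iInter₂.1 h1 (i:ℕ) (Finset.mem_range.2 i.isLt)
    have e2 := Set.mem_iInter₂.1 h2 (i:ℕ) (Finset.mem_range.2 i.isLt)
    simp only [Set.mem_preimage, Set.mem_singleton_iff] at e1 e2
    have hext : ∀ (g : Fin n → Bool), rwExt g (i:ℕ) = g i := by
      intro g
      simp only [rwExt, dif_pos i.isLt]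
    rw [hext] at e1 e2
    apply hi
    have h12 := e1.symm.trans e2
    cases hb : ε i <;> cases hb' : ε' i <;> rw [hb, hb'] at h12 <;>
      first | rfl | (exfalso; simp [rwStep] at h12)
  have hPE : P E = ∑' ε : Fin n → Bool, P (E ∩ A ε) := by
    have hU : MeasurableSet (⋃ ε : Fin n → Bool, A ε) := MeasurableSet.iUnion hAmeas
    have h1 : P E = P (E ∩ ⋃ ε : Fin n → Bool, A ε) := by
      rw [← measure_inter_add_diff E hU, hcover, add_zero]
    rw [h1, Set.inter_iUnion]
    rw [measure_iUnion (fun ε ε' hne => Disjoint.mono Set.inter_subset_right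
      Set.inter_subset_right (hAdisj hne)) (fun ε => hEmeas.inter (hAmeas ε))]
  have hPEA : ∀ ε : Fin n → Bool,
      P (E ∩ A ε) = if rwHit N n 1 (rwExt ε) then (1/2 : ENNReal)^n else 0 := by
    intro ε
    by_cases h : rwHit N n 1 (rwExt ε)
    · rw [if_pos h, ← hPA ε]
      congr 1
      exact Set.inter_eq_right.2 (fun ω hω => (hEiff ε ω hω).2 h)
    · rw [if_neg h]
      have hempty : E ∩ A ε = ∅ := by
        ext ω
        simp only [Set.mem_inter_iff, Set.mem_empty_iff_false, iff_false]
        rintro ⟨h1, h2⟩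
        exact h ((hEiff ε ω h2).1 h1)
      rw [hempty, measure_empty]
  rw [hPE, tsum_fintype]
  rw [Finset.sum_congr rfl (fun ε _ => hPEA ε)]
  have htoReal : (∑ ε : Fin n → Bool,
      if rwHit N n 1 (rwExt ε) then (1/2 : ENNReal)^n else 0).toReal
      = ∑ ε : Fin n → Bool, (if rwHit N n 1 (rwExt ε) then (1/2 : ℝ)^n else 0) := by
    rw [ENNReal.toReal_sum (fun ε _ => by split_ifs <;> simp [ENNReal.pow_ne_top])]
    apply Finset.sum_congr rfl
    intro ε _
    split_ifs
    · simp [ENNReal.toReal_pow]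
    · simp
  rw [htoReal]
  have hfac : ∀ ε : Fin n → Bool, (if rwHit N n 1 (rwExt ε) then (1/2 : ℝ)^n else 0)
      = (1/2:ℝ)^n * (if rwHit N n 1 (rwExt ε) then (1:ℝ) else 0) := by
    intro ε; split_ifs <;> ring
  rw [Finset.sum_congr rfl (fun ε _ => hfac ε), ← Finset.mul_sum, rwSum_eq_cnt N n 1]
  exact rwFinal N n hN hn

end RW
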